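/- arXiv:1702.05758 — 3 statements merged into one kernel-verified Lean document; each statement's English description precedes it below -/
import Mathlib

section
/- With a_n as defined by the Painlevé III recurrence with parameters α = -1/32, β = -1/4, δ = -1/32 (a_0 = -1, a_1 = 4, a_2 = 0, a_3 = 64/3, a_4 = 256/3, a_5 = 2048, and a_n = -(1/3)∑_{k=1}^{n-1} a_k ∑_{j=0}^{n-k} a_j a_{n-k-j} + (1/3)∑_{k=1}^{n-1} a_k a_{n-k} - 4a_{n-1} - (32/3)∑_{k=1}^{n-2}(2k²+k(2-n)) a_k a_{n-2-k} for n ≥ 6), one has a_n ≥ (32/3)(n-3)(n-2)·a_{n-2} for all n ≥ 5. -/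
set_option maxHeartbeats 1600000
open Finset

noncomputable def Dd (a : ℕ → ℝ) (m : ℕ) : ℝ := ∑ i ∈ range (m-1), a (i+1) * a (m-1-i)
noncomputable def Gg (a : ℕ → ℝ) (m : ℕ) : ℝ := ∑ i ∈ range (m-5), a (i+3) * a (m-3-i)
noncomputable def Ph (a : ℕ → ℝ) (m : ℕ) : ℝ :=
  ∑ i ∈ range (m/2-2), ((i:ℝ)+3)^2 * a (i+3) * a (m-3-i)
noncomputable def Vv (a : ℕ → ℝ) (m : ℕ) : ℝ :=
  ∑ i ∈ range (m-5), (2*((i:ℝ)+3)-(m:ℝ))^2 * a (i+3) * a (m-3-i)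

def PIIIInv (a : ℕ → ℝ) (n : ℕ) : Prop :=
  (3 ≤ n → 0 < a n) ∧
  (5 ≤ n → 32/3*((n:ℝ)-3)*((n:ℝ)-2) * a (n-2) ≤ a n) ∧
  (5 ≤ n → a n ≤ 32/3*((n:ℝ)-2)*((n:ℝ)-1) * a (n-2)) ∧
  (7 ≤ n → 12 * a (n-1) ≤ a n) ∧
  (6 ≤ n → Ph a n ≤ 1000 * a (n-3)) ∧
  (6 ≤ n → Vv a n ≤ 120*(n:ℝ)^2 * a (n-3))

theorem sum_Icc1 (f : ℕ → ℝ) (m : ℕ) : ∑ k ∈ Icc 1 m, f k = ∑ i ∈ range m, f (1+i) := by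
  rw [← Finset.Ico_add_one_right_eq_Icc, Finset.sum_Ico_eq_sum_range]; norm_num

theorem peel22 (g : ℕ → ℝ) (L : ℕ) :
    ∑ i ∈ range (L+4), g i = g 0 + g 1 + (∑ i ∈ range L, g (i+2)) + g (L+2) + g (L+3) := by
  rw [Finset.sum_range_succ, Finset.sum_range_succ, Finset.sum_range_succ',
     Finset.sum_range_succ']; ring

theorem peel23 (g : ℕ → ℝ) (L : ℕ) :
    ∑ i ∈ range (L+5), g i
      = g 0 + g 1 + (∑ i ∈ range L, g (i+2)) + g (L+2) + g (L+3) + g (L+4) := by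
  rw [Finset.sum_range_succ, Finset.sum_range_succ, Finset.sum_range_succ,
     Finset.sum_range_succ', Finset.sum_range_succ']; ring

theorem inner_split (a : ℕ → ℝ) (h0 : a 0 = -1) (m : ℕ) (hm : 1 ≤ m) :
    ∑ j ∈ range (m+1), a j * a (m-j) = -2 * a m + Dd a m := by
  obtain ⟨q, rfl⟩ : ∃ q, m = q + 1 := ⟨m - 1, by omega⟩
  rw [Finset.sum_range_succ, Finset.sum_range_succ']
  have e1 : ∀ i, q + 1 - (i+1) = q - i := fun i => by omega
  simp only [e1, Nat.sub_self, Nat.sub_zero, h0]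
  have e : Dd a (q+1) = ∑ i ∈ range q, a (i+1) * a (q - i) := by
    simp only [Dd, Nat.add_sub_cancel]
  rw [e]; ring

theorem star (a : ℕ → ℝ) (h0 : a 0 = -1) (h1 : a 1 = 4) (h2 : a 2 = 0) (p : ℕ)
    (hr : a (p+11) = -(1 / 3) * ∑ k ∈ Finset.Icc 1 (p+11 - 1),
              a k * ∑ j ∈ Finset.range (p+11 - k + 1), a j * a (p+11 - k - j)
          + (1 / 3) * ∑ k ∈ Finset.Icc 1 (p+11 - 1), a k * a (p+11 - k)
          - 4 * a (p+11 - 1)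
          - (32 / 3) * ∑ k ∈ Finset.Icc 1 (p+11 - 2),
              (2 * (k : ℝ) ^ 2 + (k : ℝ) * (2 - ((p+11 : ℕ) : ℝ))) * a k * a (p+11 - 2 - k)) :
    a (p+11) = (32/3)*((p:ℝ)+9)^2 * a (p+9) + 4 * a (p+10) - (128/3)*((p:ℝ)+7)^2 * a (p+8)
      + Gg a (p+11) - (1/3) * (∑ i ∈ range (p+9), a (i+1) * Dd a (p+10-i))
      - (16/3) * Vv a (p+9) := by
  have en1 : p+11-1 = p+10 := by omega
  have en2 : p+11-2 = p+9 := by omega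
  rw [en1, en2] at hr
  -- S1 inner split
  have hS1 : (∑ k ∈ Icc 1 (p+10), a k * ∑ j ∈ range (p+11 - k + 1), a j * a (p+11 - k - j))
      = -2 * (∑ k ∈ Icc 1 (p+10), a k * a (p+11-k))
        + ∑ k ∈ Icc 1 (p+10), a k * Dd a (p+11-k) := by
    have e : ∀ k ∈ Icc 1 (p+10), a k * ∑ j ∈ range (p+11 - k + 1), a j * a (p+11 - k - j)
        = -2 * (a k * a (p+11-k)) + a k * Dd a (p+11-k) := by
      intro k hk
      rw [mem_Icc] at hk
      rw [inner_split a h0 _ (by omega)]; ring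
    rw [Finset.sum_congr rfl e, Finset.sum_add_distrib, ← Finset.mul_sum]
  -- S2 split
  have hS2 : (∑ k ∈ Icc 1 (p+10), a k * a (p+11-k)) = 8 * a (p+10) + Gg a (p+11) := by
    rw [sum_Icc1 (fun k => a k * a (p+11-k)) (p+10)]
    rw [show (p+10) = (p+6)+4 by omega, peel22 (fun i => a (1+i) * a (p+11-(1+i))) (p+6)]
    rw [show p+11-(1+0) = p+6+4 by omega, show (1:ℕ)+0 = 1 by omega,
        show (1:ℕ)+1 = 2 by omega, h1, h2,
        show p+11-(1+(p+6+2)) = 2 by omega, h2,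
        show p+11-(1+(p+6+3)) = 1 by omega, show 1+(p+6+3) = p+6+4 by omega, h1]
    have c5 : (∑ i ∈ range (p+6), a (1+(i+2)) * a (p+11-(1+(i+2)))) = Gg a (p+11) := by
      unfold Gg
      rw [show p+11-5 = p+6 by omega]
      exact Finset.sum_congr rfl fun i _ => by
        rw [show p+11-3-i = p+8-i by omega, show p+11-(1+(i+2)) = p+8-i by omega,
            show 1+(i+2) = i+3 by omega]
    rw [c5]; ring
  -- T split : kill top term
  have hT : (∑ k ∈ Icc 1 (p+10), a k * Dd a (p+11-k))
      = ∑ i ∈ range (p+9), a (i+1) * Dd a (p+10-i) := by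
    rw [sum_Icc1 (fun k => a k * Dd a (p+11-k)) (p+10)]
    rw [show (p+10) = (p+9)+1 by omega, Finset.sum_range_succ]
    have : Dd a (p+11-(1+(p+9))) = 0 := by
      rw [show p+11-(1+(p+9)) = 1 by omega]
      simp [Dd]
    rw [this, mul_zero, add_zero]
    exact Finset.sum_congr rfl fun i _ => by
      rw [show p+11-(1+i) = p+10-i by omega, show 1+i = i+1 by omega]

  -- S3 split
  have hMid : (2:ℝ) * (∑ i ∈ range (p+4),
        (2 * ((1+(i+2) : ℕ) : ℝ) ^ 2 + ((1+(i+2) : ℕ) : ℝ) * (2 - ((p+11 : ℕ) : ℝ)))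
          * a (1+(i+2)) * a (p+4+5-(1+(i+2))))
      = Vv a (p+9) := by
    have hF : ∀ i ∈ range (p+4),
        (2 * ((1+(i+2) : ℕ) : ℝ) ^ 2 + ((1+(i+2) : ℕ) : ℝ) * (2 - ((p+11 : ℕ) : ℝ)))
          * a (1+(i+2)) * a (p+4+5-(1+(i+2)))
        = (2 * (((i:ℝ))+3) ^ 2 + ((i:ℝ)+3) * (2 - ((p:ℝ)+11))) * a (i+3) * a (p+6-i) := by
      intro i _
      rw [show 1+(i+2) = i+3 by omega, show p+4+5-(i+3) = p+6-i by omega]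
      push_cast
      ring
    rw [Finset.sum_congr rfl hF]
    have hrefl : (∑ i ∈ range (p+4),
        (2 * (((i:ℝ))+3) ^ 2 + ((i:ℝ)+3) * (2 - ((p:ℝ)+11))) * a (i+3) * a (p+6-i))
      = ∑ i ∈ range (p+4),
        (2 * (((p:ℝ)+3-(i:ℝ))+3) ^ 2 + (((p:ℝ)+3-(i:ℝ))+3) * (2 - ((p:ℝ)+11))) * a (p+6-i) * a (i+3) := by
      rw [← Finset.sum_range_reflect]
      exact Finset.sum_congr rfl fun i hi => by
        rw [mem_range] at hi
        rw [show p+4-1-i = p+3-i by omega, show (p+3-i)+3 = p+6-i by omega,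
            show p+6-(p+3-i) = i+3 by omega]
        have : ((p+3-i : ℕ) : ℝ) = (p:ℝ)+3-(i:ℝ) := by
          have : i ≤ p+3 := by omega
          push_cast [this]; ring
        rw [this]
    have hVv : Vv a (p+9) = ∑ i ∈ range (p+4),
        (2*((i:ℝ)+3)-((p:ℝ)+9))^2 * a (i+3) * a (p+6-i) := by
      unfold Vv
      rw [show p+9-5 = p+4 by omega]
      exact Finset.sum_congr rfl fun i _ => by
        rw [show p+9-3-i = p+6-i by omega]
        push_cast
        ring
    rw [two_mul]
    nth_rewrite 2 [hrefl]
    rw [← Finset.sum_add_distrib, hVv]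
    exact Finset.sum_congr rfl fun i _ => by ring
  have hS3 : (∑ k ∈ Icc 1 (p+9), (2 * (k : ℝ) ^ 2 + (k : ℝ) * (2 - ((p+11 : ℕ) : ℝ))) * a k * a (p+9 - k))
      = -((p:ℝ)+9)^2 * a (p+9) + 4*((p:ℝ)+7)^2 * a (p+8) + (1/2) * Vv a (p+9) := by
    rw [sum_Icc1 (fun k => (2 * (k : ℝ) ^ 2 + (k : ℝ) * (2 - ((p+11 : ℕ) : ℝ))) * a k * a (p+9 - k)) (p+9)]
    rw [show (p+9) = (p+4)+5 by omega,
        peel23 (fun i => (2 * ((1+i : ℕ) : ℝ) ^ 2 + ((1+i : ℕ) : ℝ) * (2 - ((p+11 : ℕ) : ℝ)))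
          * a (1+i) * a (p+4+5-(1+i))) (p+4)]
    rw [← hMid]
    rw [show p+4+5-(1+0) = p+8 by omega, show (1:ℕ)+0 = 1 by omega,
        show (1:ℕ)+1 = 2 by omega, h1, h2,
        show p+4+5-(1+(p+4+2)) = 2 by omega, h2,
        show p+4+5-(1+(p+4+3)) = 1 by omega, show 1+(p+4+3) = p+8 by omega, h1,
        show p+4+5-(1+(p+4+4)) = 0 by omega, show 1+(p+4+4) = p+4+5 by omega, h0]
    push_cast
    ring

  rw [hS1, hS2, hT, hS3] at hr
  rw [hr]; ring

theorem peel11 (g : ℕ → ℝ) (L : ℕ) :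
    ∑ i ∈ range (L+2), g i = g 0 + (∑ i ∈ range L, g (i+1)) + g (L+1) := by
  rw [Finset.sum_range_succ, Finset.sum_range_succ']; ring

theorem peel01 (g : ℕ → ℝ) (L : ℕ) :
    ∑ i ∈ range (L+1), g i = g 0 + (∑ i ∈ range L, g (i+1)) := by
  rw [Finset.sum_range_succ']; ring

theorem half_bound (f : ℕ → ℝ) (L c : ℕ) (hc : c ≤ L) (hLc : L - c ≤ c)
    (hsym : ∀ i, i < L → f (L-1-i) = f i) (hnn : ∀ i, i < c → 0 ≤ f i) :
    ∑ i ∈ range L, f i ≤ 2 * ∑ i ∈ range c, f i := by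
  have hsplit : ∑ i ∈ range L, f i
      = (∑ i ∈ range c, f i) + ∑ i ∈ Ico c L, f i := by
    rw [Finset.range_eq_Ico, ← Finset.sum_Ico_consecutive f (Nat.zero_le c) hc,
        ← Finset.range_eq_Ico]
  have h2 : ∑ i ∈ Ico c L, f i = ∑ i ∈ range (L-c), f (c+i) :=
    Finset.sum_Ico_eq_sum_range f c L
  have h3 : ∑ i ∈ range (L-c), f (c+i) = ∑ i ∈ range (L-c), f i := by
    rw [← Finset.sum_range_reflect (fun i => f (c+i)) (L-c)]
    exact Finset.sum_congr rfl fun i hi => by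
      rw [mem_range] at hi
      rw [show c+(L-c-1-i) = L-1-i by omega, hsym i (by omega)]
  have h4 : ∑ i ∈ range (L-c), f i ≤ ∑ i ∈ range c, f i :=
    Finset.sum_le_sum_of_subset_of_nonneg
      (Finset.range_subset_range.mpr hLc)
      (fun i hi _ => hnn i (mem_range.mp hi))
  linarith [hsplit, h2, h3, h4]

theorem Gnn (a : ℕ → ℝ) (m : ℕ) (hpos : ∀ k, 3 ≤ k → k ≤ m-3 → 0 ≤ a k) :
    0 ≤ Gg a m := by
  apply Finset.sum_nonneg
  intro i hi
  rw [mem_range] at hi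
  exact mul_nonneg (hpos _ (by omega) (by omega)) (hpos _ (by omega) (by omega))

theorem Gbound (a : ℕ → ℝ) (h3 : a 3 = 64/3) (m : ℕ) (hm : 8 ≤ m)
    (hphi : Ph a m ≤ 1000 * a (m-3))
    (hpos : ∀ k, 3 ≤ k → k ≤ m-3 → 0 < a k) :
    Gg a m ≤ 503/3 * a (m-3) := by
  obtain ⟨q, rfl⟩ : ∃ q, m = q + 8 := ⟨m - 8, by omega⟩
  set K := (q+8)/2 with hK
  have hK4 : 4 ≤ K := by omega
  have emid : (∑ i ∈ range (q+1), a (i+1+3) * a (q+8-3-(i+1)))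
      = ∑ i ∈ range (q+1), a (i+4) * a (q+4-i) :=
    Finset.sum_congr rfl fun i _ => by
      rw [show q+8-3-(i+1) = q+4-i by omega, show i+1+3 = i+4 by omega]
  have hGsplit : Gg a (q+8) = a 3 * a (q+5) + (∑ i ∈ range (q+1), a (i+4) * a (q+4-i))
      + a (q+5) * a 3 := by
    unfold Gg
    rw [show q+8-5 = (q+1)+2 by omega, peel11 (fun i => a (i+3) * a (q+8-3-i)) (q+1)]
    rw [show q+8-3-0 = q+5 by omega, show q+8-3-(q+1+1) = 3 by omega,
        show q+1+1+3 = q+5 by omega, emid]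
  have hM4 : (∑ i ∈ range (q+1), a (i+4) * a (q+4-i))
      ≤ 2 * ∑ i ∈ range (K-3), a (i+4) * a (q+4-i) := by
    apply half_bound _ _ _ (by omega) (by omega)
    · intro i hi
      rw [show q+1-1-i = q-i by omega, show (q-i)+4 = q+4-i by omega,
          show q+4-(q-i) = i+4 by omega]
      ring
    · intro i hi
      exact mul_nonneg (hpos _ (by omega) (by omega)).le (hpos _ (by omega) (by omega)).le
  have hW : (∑ i ∈ range (K-3), a (i+4) * a (q+4-i))
      ≤ 1/16 * ∑ i ∈ range (K-3), ((i:ℝ)+4)^2 * a (i+4) * a (q+4-i) := by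
    rw [Finset.mul_sum]
    apply Finset.sum_le_sum
    intro i hi
    rw [mem_range] at hi
    have hp1 := hpos (i+4) (by omega) (by omega)
    have hp2 := hpos (q+4-i) (by omega) (by omega)
    nlinarith [mul_nonneg (by positivity : (0:ℝ) ≤ ((i:ℝ)^2+8*(i:ℝ))) (mul_pos hp1 hp2).le]
  have hPh : Ph a (q+8) = 9 * a 3 * a (q+5)
      + ∑ i ∈ range (K-3), ((i:ℝ)+4)^2 * a (i+4) * a (q+4-i) := by
    unfold Ph
    rw [show (q+8)/2-2 = (K-3)+1 by omega,
        peel01 (fun i => ((i:ℝ)+3)^2 * a (i+3) * a (q+8-3-i)) (K-3)]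
    rw [show q+8-3-0 = q+5 by omega]
    congr 1
    · norm_num
    · exact Finset.sum_congr rfl fun i _ => by
        rw [show q+8-3-(i+1) = q+4-i by omega, show i+1+3 = i+4 by omega]
        push_cast; ring
  have hp3 := hpos 3 (by omega) (by omega)
  have hp5 := hpos (q+5) (by omega) (by omega)
  have hphnn : 0 ≤ ∑ i ∈ range (K-3), ((i:ℝ)+4)^2 * a (i+4) * a (q+4-i) := by
    apply Finset.sum_nonneg
    intro i hi
    rw [mem_range] at hi
    have hp1 := hpos (i+4) (by omega) (by omega)
    have hp2 := hpos (q+4-i) (by omega) (by omega)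
    positivity
  rw [show q+8-3 = q+5 by omega] at hphi ⊢
  rw [hGsplit]
  rw [hPh] at hphi
  rw [h3] at *
  nlinarith [hM4, hW, hphi, hp5]

theorem D_split (a : ℕ → ℝ) (h1 : a 1 = 4) (h2 : a 2 = 0) (m : ℕ) (hm : 5 ≤ m) :
    Dd a m = 8 * a (m-1) + Gg a m := by
  obtain ⟨q, rfl⟩ : ∃ q, m = q + 5 := ⟨m - 5, by omega⟩
  unfold Dd
  rw [show q+5-1 = q+4 by omega, peel22 (fun i => a (i+1) * a (q+4-i)) q]
  have emid : (∑ i ∈ range q, a (i+2+1) * a (q+4-(i+2)))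
      = Gg a (q+5) := by
    unfold Gg
    rw [show q+5-5 = q by omega]
    exact Finset.sum_congr rfl fun i _ => by
      rw [show q+4-(i+2) = q+5-3-i by omega, show i+2+1 = i+3 by omega]
  rw [emid, show q+4-0 = q+4 by omega, show (0:ℕ)+1 = 1 by omega, h1,
      show q+4-1 = q+3 by omega, show (1:ℕ)+1 = 2 by omega, h2,
      show q+4-(q+2) = 2 by omega, h2,
      show q+4-(q+3) = 1 by omega, show q+3+1 = q+4 by omega, h1]
  ring

theorem Dbound (a : ℕ → ℝ) (h1 : a 1 = 4) (h2 : a 2 = 0) (h3 : a 3 = 64/3) (h4 : a 4 = 256/3)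
    (h5 : a 5 = 2048) (b6 : a 6 = 163840/9) (b7 : a 7 = 4997120/9)
    (m : ℕ) (hm : 2 ≤ m)
    (hbig : 9 ≤ m → (Gg a m ≤ 503/3 * a (m-3) ∧ 0 < a (m-3) ∧ 12 * a (m-3) ≤ a (m-2)
        ∧ 12 * a (m-2) ≤ a (m-1))) :
    Dd a m ≤ 46/5 * a (m-1) := by
  by_cases h9 : 9 ≤ m
  · obtain ⟨hG, hp, hr1, hr2⟩ := hbig h9
    rw [D_split a h1 h2 m (by omega)]
    linarith
  · interval_cases m <;>
      norm_num [Dd, Finset.sum_range_succ, h1, h2, h3, h4, h5, b6, b7]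

theorem Tbound (a : ℕ → ℝ) (p : ℕ)
    (hD : ∀ m, 2 ≤ m → m ≤ p+10 → Dd a m ≤ 46/5 * a (m-1))
    (hann : ∀ k, 1 ≤ k → k ≤ p+9 → 0 ≤ a k) :
    ∑ i ∈ range (p+9), a (i+1) * Dd a (p+10-i) ≤ 2116/25 * a (p+9) := by
  have step1 : (∑ i ∈ range (p+9), a (i+1) * Dd a (p+10-i))
      ≤ ∑ i ∈ range (p+9), a (i+1) * (46/5 * a (p+9-i)) := by
    apply Finset.sum_le_sum
    intro i hi
    rw [mem_range] at hi
    have hDi := hD (p+10-i) (by omega) (by omega)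
    rw [show (p+10-i)-1 = p+9-i by omega] at hDi
    exact mul_le_mul_of_nonneg_left hDi (hann (i+1) (by omega) (by omega))
  have step2 : (∑ i ∈ range (p+9), a (i+1) * (46/5 * a (p+9-i)))
      = 46/5 * Dd a (p+10) := by
    unfold Dd
    rw [show p+10-1 = p+9 by omega, Finset.mul_sum]
    exact Finset.sum_congr rfl fun i _ => by ring
  have step3 := hD (p+10) (by omega) (by omega)
  rw [show p+10-1 = p+9 by omega] at step3
  have h9 := hann (p+9) (by omega) (by omega)
  linarith

theorem Dnn (a : ℕ → ℝ) (m : ℕ) (hann : ∀ k, 1 ≤ k → k ≤ m-1 → 0 ≤ a k) :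
    0 ≤ Dd a m := by
  apply Finset.sum_nonneg
  intro i hi
  rw [mem_range] at hi
  exact mul_nonneg (hann _ (by omega) (by omega)) (hann _ (by omega) (by omega))

theorem peel02 (g : ℕ → ℝ) (L : ℕ) :
    ∑ i ∈ range (L+2), g i = g 0 + g 1 + ∑ i ∈ range L, g (i+2) := by
  rw [Finset.sum_range_succ', Finset.sum_range_succ']; ring

theorem coef_phi (x K : ℝ) (hx : 0 ≤ x) (hK : 7 ≤ K) (hxK : x ≤ K-5) :
    (K-2)*((x+5)^2*(x+4)*(x+3)) ≤ K^2*(K-1)*(x+3)^2 := by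
  nlinarith [mul_nonneg (mul_nonneg (mul_nonneg (by linarith : (0:ℝ) ≤ x+3)
      (by linarith : (0:ℝ) ≤ K-5-x)) (by nlinarith : (0:ℝ) ≤ (K-2)*x)) (by linarith : (0:ℝ) ≤ K+9+x),
    mul_nonneg (mul_nonneg (by linarith : (0:ℝ) ≤ x+3) (by linarith : (0:ℝ) ≤ K-5-x))
      (by nlinarith : (0:ℝ) ≤ 3*K^2+12*K-40)]

theorem phi_step (a : ℕ → ℝ) (h3 : a 3 = 64/3) (h4 : a 4 = 256/3) (n : ℕ) (hn : 15 ≤ n)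
    (hC : ∀ u, 5 ≤ u → u ≤ n/2 → a u ≤ 32/3*((u:ℝ)-2)*((u:ℝ)-1)* a (u-2))
    (hpos : ∀ k, 3 ≤ k → k ≤ n-3 → 0 < a k)
    (hphi2 : Ph a (n-2) ≤ 1000 * a (n-5))
    (hB3 : 32/3*((n:ℝ)-6)*((n:ℝ)-5) * a (n-5) ≤ a (n-3))
    (hr3 : 12 * a (n-4) ≤ a (n-3)) :
    Ph a n ≤ 1000 * a (n-3) := by
  set K := n/2 with hKdef
  have hK7 : 7 ≤ K := by omega
  have hKn : 2*K ≤ n ∧ n ≤ 2*K+1 := by omega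
  -- split
  have hsplit : Ph a n = 9 * a 3 * a (n-3) + 16 * a 4 * a (n-4)
      + ∑ i ∈ range (K-4), ((i:ℝ)+5)^2 * a (i+5) * a (n-5-i) := by
    unfold Ph
    rw [show n/2-2 = (K-4)+2 by omega,
        peel02 (fun i => ((i:ℝ)+3)^2 * a (i+3) * a (n-3-i)) (K-4)]
    congr 1
    · congr 1
      · rw [show n-3-0 = n-3 by omega]; norm_num
      · rw [show n-3-1 = n-4 by omega, show (1:ℕ)+3 = 4 by omega]; norm_num
    · exact Finset.sum_congr rfl fun i _ => by
        rw [show n-3-(i+2) = n-5-i by omega, show i+2+3 = i+5 by omega]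
        push_cast; ring
  -- termwise bound on the middle
  have hmid : (∑ i ∈ range (K-4), ((i:ℝ)+5)^2 * a (i+5) * a (n-5-i))
      ≤ 32/3*((K:ℝ)^2*((K:ℝ)-1)/((K:ℝ)-2)) * ∑ i ∈ range (K-4), ((i:ℝ)+3)^2 * a (i+3) * a (n-5-i) := by
    rw [Finset.mul_sum]
    apply Finset.sum_le_sum
    intro i hi
    rw [mem_range] at hi
    have hy := hpos (i+3) (by omega) (by omega)
    have hz := hpos (n-5-i) (by omega) (by omega)
    have hCu := hC (i+5) (by omega) (by omega)
    rw [show i+5-2 = i+3 by omega] at hCu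
    push_cast at hCu
    have hK2 : (0:ℝ) < (K:ℝ)-2 := by
      have : (7:ℝ) ≤ (K:ℝ) := by exact_mod_cast hK7
      linarith
    have hcoef := coef_phi (i:ℝ) (K:ℝ) (Nat.cast_nonneg i) (by exact_mod_cast hK7)
      (by
        have : (i:ℝ) ≤ (K:ℝ)-5 ↔ (i:ℝ)+5 ≤ (K:ℝ) := by constructor <;> (intro; linarith)
        rw [this]
        exact_mod_cast (by omega : i+5 ≤ K))
    -- a(i+5) ≤ 32/3 (i+3)(i+4) a(i+3)
    have e2 : a (i+5) ≤ 32/3*((i:ℝ)+3)*((i:ℝ)+4) * a (i+3) := by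
      calc a (i+5) ≤ 32/3*(((i:ℝ)+5)-2)*(((i:ℝ)+5)-1)* a (i+3) := hCu
        _ = 32/3*((i:ℝ)+3)*((i:ℝ)+4) * a (i+3) := by ring
    -- combine
    have hsq : (0:ℝ) ≤ ((i:ℝ)+5)^2 := sq_nonneg _
    have step1 : ((i:ℝ)+5)^2 * a (i+5) * a (n-5-i)
        ≤ ((i:ℝ)+5)^2 * (32/3*((i:ℝ)+3)*((i:ℝ)+4) * a (i+3)) * a (n-5-i) := by
      have := mul_le_mul_of_nonneg_left e2 hsq
      exact mul_le_mul_of_nonneg_right this hz.le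
    refine step1.trans ?_
    rw [← mul_le_mul_iff_of_pos_right hK2]
    have hne : ((K:ℝ)-2) ≠ 0 := ne_of_gt hK2
    have eR : 32/3*((K:ℝ)^2*((K:ℝ)-1)/((K:ℝ)-2)) * (((i:ℝ)+3)^2 * a (i+3) * a (n-5-i)) * ((K:ℝ)-2)
        = 32/3*((K:ℝ)^2*((K:ℝ)-1)) * (((i:ℝ)+3)^2 * a (i+3) * a (n-5-i)) := by
      field_simp
    rw [eR]
    nlinarith [mul_le_mul_of_nonneg_right hcoef (mul_pos hy hz).le]
  -- subset comparison with Ph (n-2)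
  have hsub : (∑ i ∈ range (K-4), ((i:ℝ)+3)^2 * a (i+3) * a (n-5-i)) ≤ Ph a (n-2) := by
    unfold Ph
    rw [show (n-2)-3 = n-5 by omega]
    apply Finset.sum_le_sum_of_subset_of_nonneg (Finset.range_subset_range.mpr (by omega))
    intro i hi _
    rw [mem_range] at hi
    have hy := hpos (i+3) (by omega) (by omega)
    have hz := hpos (n-5-i) (by omega) (by omega)
    positivity
  have hKc : (7:ℝ) ≤ (K:ℝ) := by exact_mod_cast hK7
  have hK2 : (0:ℝ) < (K:ℝ)-2 := by linarith
  have hfpos : (0:ℝ) ≤ 32/3*((K:ℝ)^2*((K:ℝ)-1)/((K:ℝ)-2)) := by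
    have h1 : (0:ℝ) ≤ (K:ℝ)^2*((K:ℝ)-1) := by nlinarith
    have := div_nonneg h1 (le_of_lt hK2)
    linarith
  have hznn : (0:ℝ) ≤ a (n-5) := (hpos (n-5) (by omega) (by omega)).le
  have hchain : (∑ i ∈ range (K-4), ((i:ℝ)+5)^2 * a (i+5) * a (n-5-i))
      ≤ 32/3*((K:ℝ)^2*((K:ℝ)-1)/((K:ℝ)-2)) * (1000 * a (n-5)) :=
    hmid.trans (mul_le_mul_of_nonneg_left (hsub.trans hphi2) hfpos)
  -- parity polynomial bound
  have hpoly : 9000*(K:ℝ)^2*((K:ℝ)-1) ≤ 6248*((K:ℝ)-2)*((n:ℝ)-6)*((n:ℝ)-5) := by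
    have hparity : n = 2*K ∨ n = 2*K+1 := by omega
    rcases hparity with h|h
    · have hK8 : (8:ℝ) ≤ (K:ℝ) := by exact_mod_cast (by omega : 8 ≤ K)
      have hc : ((n:ℝ)) = 2*(K:ℝ) := by rw [h]; push_cast; ring
      have ht : (0:ℝ) ≤ (K:ℝ)-8 := by linarith
      rw [hc]
      nlinarith [mul_nonneg (mul_nonneg ht ht) ht, mul_nonneg ht ht, ht]
    · have hc : ((n:ℝ)) = 2*(K:ℝ)+1 := by rw [h]; push_cast; ring
      have ht : (0:ℝ) ≤ (K:ℝ)-7 := by linarith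
      rw [hc]
      nlinarith [mul_nonneg (mul_nonneg ht ht) ht, mul_nonneg ht ht, ht]
  -- convert to bound on the f-multiplied term
  have hdiv : 32/3*((K:ℝ)^2*((K:ℝ)-1)/((K:ℝ)-2)) * (1000 * a (n-5))
      ≤ 6248/9 * a (n-3) := by
    have h1 : (K:ℝ)^2*((K:ℝ)-1)/((K:ℝ)-2) ≤ (6248/9000)*((n:ℝ)-6)*((n:ℝ)-5) := by
      rw [div_le_iff₀ hK2]
      nlinarith [hpoly]
    have h2 : 32/3*((K:ℝ)^2*((K:ℝ)-1)/((K:ℝ)-2)) * (1000 * a (n-5))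
        ≤ 32/3*((6248/9000)*((n:ℝ)-6)*((n:ℝ)-5)) * (1000 * a (n-5)) := by
      have := mul_le_mul_of_nonneg_right h1 (by linarith [hznn] : (0:ℝ) ≤ 1000 * a (n-5))
      nlinarith [this]
    have h3 : 32/3*((6248/9000)*((n:ℝ)-6)*((n:ℝ)-5)) * (1000 * a (n-5))
        = (6248/9) * (32/3*((n:ℝ)-6)*((n:ℝ)-5) * a (n-5)) := by ring
    rw [h3] at h2
    have h4 := mul_le_mul_of_nonneg_left hB3 (by norm_num : (0:ℝ) ≤ 6248/9)
    linarith
  have hw := hpos (n-4) (by omega) (by omega)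
  rw [hsplit, h3, h4]
  linarith [hchain, hdiv, hr3]

theorem vv_step (a : ℕ → ℝ) (h3 : a 3 = 64/3) (h4 : a 4 = 256/3) (n : ℕ) (hn : 14 ≤ n)
    (hC : ∀ u, 5 ≤ u → u ≤ n/2 → a u ≤ 32/3*((u:ℝ)-2)*((u:ℝ)-1)* a (u-2))
    (hpos : ∀ k, 3 ≤ k → k ≤ n-3 → 0 < a k)
    (hvv2 : Vv a (n-2) ≤ 120*((n:ℝ)-2)^2 * a (n-5))
    (hB3 : 32/3*((n:ℝ)-6)*((n:ℝ)-5) * a (n-5) ≤ a (n-3))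
    (hr3 : 12 * a (n-4) ≤ a (n-3)) :
    Vv a n ≤ 120*(n:ℝ)^2 * a (n-3) := by
  set K := n/2 with hKdef
  have hK7 : 7 ≤ K := by omega
  have hy := hpos (n-3) (by omega) (by omega)
  have hw := hpos (n-4) (by omega) (by omega)
  have hz := hpos (n-5) (by omega) (by omega)
  -- split
  have hsplit : Vv a n = ((n:ℝ)-6)^2 * a 3 * a (n-3) + ((n:ℝ)-8)^2 * a 4 * a (n-4)
      + (∑ i ∈ range (n-9), (2*((i:ℝ)+5)-(n:ℝ))^2 * a (i+5) * a (n-5-i))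
      + ((n:ℝ)-8)^2 * a (n-4) * a 4 + ((n:ℝ)-6)^2 * a (n-3) * a 3 := by
    unfold Vv
    conv_lhs => rw [show n-5 = (n-9)+4 by omega]
    rw [peel22 (fun i => (2*((i:ℝ)+3)-(n:ℝ))^2 * a (i+3) * a (n-3-i)) (n-9)]
    congr 1; congr 1; congr 1; congr 1
    · rw [show n-3-0 = n-3 by omega, show (0:ℕ)+3 = 3 by omega]; push_cast; ring
    · rw [show n-3-1 = n-4 by omega, show (1:ℕ)+3 = 4 by omega]; push_cast; ring
    · exact Finset.sum_congr rfl fun i _ => by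
        rw [show n-3-(i+2) = n-5-i by omega, show i+2+3 = i+5 by omega]
        push_cast; ring
    · rw [show n-3-(n-9+2) = 4 by omega, show n-9+2+3 = n-4 by omega,
          show ((n-9+2 : ℕ) : ℝ) = (n:ℝ)-7 from by
            rw [Nat.cast_add, Nat.cast_sub (by omega : 9 ≤ n)]; push_cast; ring]
      ring
    · rw [show n-3-(n-9+3) = 3 by omega, show n-9+3+3 = n-3 by omega,
          show ((n-9+3 : ℕ) : ℝ) = (n:ℝ)-6 from by
            rw [Nat.cast_add, Nat.cast_sub (by omega : 9 ≤ n)]; push_cast; ring]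
      ring
  -- halving
  have hhalf : (∑ i ∈ range (n-9), (2*((i:ℝ)+5)-(n:ℝ))^2 * a (i+5) * a (n-5-i))
      ≤ 2 * ∑ i ∈ range (K-4), (2*((i:ℝ)+5)-(n:ℝ))^2 * a (i+5) * a (n-5-i) := by
    apply half_bound _ _ _ (by omega) (by omega)
    · intro i hi
      rw [show n-9-1-i = n-10-i by omega, show (n-10-i)+5 = n-5-i by omega,
          show n-5-(n-10-i) = i+5 by omega,
          show ((n-10-i : ℕ) : ℝ) = (n:ℝ)-10-(i:ℝ) from by
            rw [Nat.cast_sub (by omega : i ≤ n-10), Nat.cast_sub (by omega : 10 ≤ n)]; norm_num]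
      ring
    · intro i hi
      have h5 := hpos (i+5) (by omega) (by omega)
      have hz2 := hpos (n-5-i) (by omega) (by omega)
      positivity
  -- termwise comparison
  have hterm : (∑ i ∈ range (K-4), (2*((i:ℝ)+5)-(n:ℝ))^2 * a (i+5) * a (n-5-i))
      ≤ 32/3*((K:ℝ)-2)*((K:ℝ)-1)
        * ∑ i ∈ range (K-4), (2*((i:ℝ)+3)-((n:ℝ)-2))^2 * a (i+3) * a (n-5-i) := by
    rw [Finset.mul_sum]
    apply Finset.sum_le_sum
    intro i hi
    rw [mem_range] at hi
    have hy2 := hpos (i+3) (by omega) (by omega)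
    have h5 := hpos (i+5) (by omega) (by omega)
    have hz2 := hpos (n-5-i) (by omega) (by omega)
    have hiK : (i:ℝ) ≤ (K:ℝ)-5 := by
      have : (i:ℝ)+5 ≤ (K:ℝ) := by exact_mod_cast (by omega : i+5 ≤ K)
      linarith
    have h2K : 2*((i:ℝ)+5) ≤ (n:ℝ) := by
      have : ((2*(i+5) : ℕ) : ℝ) ≤ (n:ℝ) := by exact_mod_cast (by omega : 2*(i+5) ≤ n)
      push_cast at this; linarith
    have e1 : (2*((i:ℝ)+5)-(n:ℝ))^2 ≤ (2*((i:ℝ)+3)-((n:ℝ)-2))^2 := by nlinarith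
    have hCu := hC (i+5) (by omega) (by omega)
    rw [show i+5-2 = i+3 by omega] at hCu
    push_cast at hCu
    have e2 : a (i+5) ≤ 32/3*((i:ℝ)+3)*((i:ℝ)+4) * a (i+3) := by
      calc a (i+5) ≤ 32/3*(((i:ℝ)+5)-2)*(((i:ℝ)+5)-1)* a (i+3) := hCu
        _ = 32/3*((i:ℝ)+3)*((i:ℝ)+4) * a (i+3) := by ring
    have e3 : ((i:ℝ)+3)*((i:ℝ)+4) ≤ ((K:ℝ)-2)*((K:ℝ)-1) := by nlinarith
    have w'nn : (0:ℝ) ≤ (2*((i:ℝ)+3)-((n:ℝ)-2))^2 := sq_nonneg _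
    nlinarith [mul_le_mul_of_nonneg_right e1 (mul_pos h5 hz2).le,
      mul_le_mul_of_nonneg_right (mul_le_mul_of_nonneg_left e2 w'nn) hz2.le,
      mul_le_mul_of_nonneg_right e3
        (by positivity : (0:ℝ) ≤ 32/3 * ((2*((i:ℝ)+3)-((n:ℝ)-2))^2 * (a (i+3) * a (n-5-i))))]
  -- subset into Vv (n-2)
  have hsub : (∑ i ∈ range (K-4), (2*((i:ℝ)+3)-((n:ℝ)-2))^2 * a (i+3) * a (n-5-i))
      ≤ Vv a (n-2) := by
    unfold Vv
    rw [show (n-2)-3 = n-5 by omega, show (n-2)-5 = n-7 by omega,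
        Nat.cast_sub (by omega : 2 ≤ n)]
    norm_num
    apply Finset.sum_le_sum_of_subset_of_nonneg (Finset.range_subset_range.mpr (by omega))
    intro i hi _
    rw [mem_range] at hi
    have hy2 := hpos (i+3) (by omega) (by omega)
    have hz2 := hpos (n-5-i) (by omega) (by omega)
    positivity
  -- assemble
  have hKc : (7:ℝ) ≤ (K:ℝ) := by exact_mod_cast hK7
  have hFnn : (0:ℝ) ≤ 32/3*((K:ℝ)-2)*((K:ℝ)-1) := by nlinarith
  have hchain : (∑ i ∈ range (n-9), (2*((i:ℝ)+5)-(n:ℝ))^2 * a (i+5) * a (n-5-i))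
      ≤ 2 * (32/3*((K:ℝ)-2)*((K:ℝ)-1) * (120*((n:ℝ)-2)^2 * a (n-5))) := by
    have c1 := hterm.trans (mul_le_mul_of_nonneg_left (hsub.trans hvv2) hFnn)
    linarith [hhalf, c1]
  have hN14 : (14:ℝ) ≤ (n:ℝ) := by exact_mod_cast hn
  have hc0 : (0:ℝ) ≤ 120*(n:ℝ)^2 - 128/3*((n:ℝ)-6)^2 - 128/9*((n:ℝ)-8)^2 := by
    nlinarith [sq_nonneg ((n:ℝ))]
  have hpoly : 2560*((K:ℝ)-2)*((K:ℝ)-1)*((n:ℝ)-2)^2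
      ≤ (120*(n:ℝ)^2 - 128/3*((n:ℝ)-6)^2 - 128/9*((n:ℝ)-8)^2) * (32/3*((n:ℝ)-6)*((n:ℝ)-5)) := by
    have hparity : n = 2*K ∨ n = 2*K+1 := by omega
    have ht : (0:ℝ) ≤ (K:ℝ)-7 := by linarith
    rcases hparity with h|h
    · have hc : ((n:ℝ)) = 2*(K:ℝ) := by rw [h]; push_cast; ring
      rw [hc]
      nlinarith [mul_nonneg (mul_nonneg (mul_nonneg ht ht) ht) ht,
        mul_nonneg (mul_nonneg ht ht) ht, mul_nonneg ht ht, ht]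
    · have hc : ((n:ℝ)) = 2*(K:ℝ)+1 := by rw [h]; push_cast; ring
      rw [hc]
      nlinarith [mul_nonneg (mul_nonneg (mul_nonneg ht ht) ht) ht,
        mul_nonneg (mul_nonneg ht ht) ht, mul_nonneg ht ht, ht]
  -- combine everything
  have hBc := mul_le_mul_of_nonneg_left hB3 hc0
  have hzz := mul_le_mul_of_nonneg_right hpoly hz.le
  rw [hsplit, h3, h4]
  nlinarith [hchain, hBc, hzz, mul_le_mul_of_nonneg_left hr3
    (by positivity : (0:ℝ) ≤ 128/9*((n:ℝ)-8)^2)]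


theorem Vnn (a : ℕ → ℝ) (m : ℕ) (hpos : ∀ k, 3 ≤ k → k ≤ m-3 → 0 ≤ a k) :
    0 ≤ Vv a m := by
  apply Finset.sum_nonneg
  intro i hi
  rw [Finset.mem_range] at hi
  have h1 := hpos (i+3) (by omega) (by omega)
  have h2 := hpos (m-3-i) (by omega) (by omega)
  positivity
theorem stmt_7 (a : ℕ → ℝ)
    (h0 : a 0 = -1) (h1 : a 1 = 4) (h2 : a 2 = 0)
    (h3 : a 3 = 64 / 3) (h4 : a 4 = 256 / 3) (h5 : a 5 = 2048)
    (hrec : ∀ n : ℕ, 6 ≤ n →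
      a n = -(1 / 3) * ∑ k ∈ Finset.Icc 1 (n - 1),
              a k * ∑ j ∈ Finset.range (n - k + 1), a j * a (n - k - j)
          + (1 / 3) * ∑ k ∈ Finset.Icc 1 (n - 1), a k * a (n - k)
          - 4 * a (n - 1)
          - (32 / 3) * ∑ k ∈ Finset.Icc 1 (n - 2),
              (2 * (k : ℝ) ^ 2 + (k : ℝ) * (2 - (n : ℝ))) * a k * a (n - 2 - k)) :
    ∀ n : ℕ, 5 ≤ n → a n ≥ (32 / 3) * ((n : ℝ) - 3) * ((n : ℝ) - 2) * a (n - 2) := by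
  -- exact values
  have b6 : a 6 = 163840/9 := by
    have h := hrec 6 (by norm_num)
    norm_num [sum_Icc1, Finset.sum_range_succ, h0,h1,h2,h3,h4,h5] at h
    linarith
  have b7 : a 7 = 4997120/9 := by
    have h := hrec 7 (by norm_num)
    norm_num [sum_Icc1, Finset.sum_range_succ, h0,h1,h2,h3,h4,h5,b6] at h
    linarith
  have b8 : a 8 = 7602176 := by
    have h := hrec 8 (by norm_num)
    norm_num [sum_Icc1, Finset.sum_range_succ, h0,h1,h2,h3,h4,h5,b6,b7] at h
    linarith
  have b9 : a 9 = 23735828480/81 := by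
    have h := hrec 9 (by norm_num)
    norm_num [sum_Icc1, Finset.sum_range_succ, h0,h1,h2,h3,h4,h5,b6,b7,b8] at h
    linarith
  have b10 : a 10 = 438371876864/81 := by
    have h := hrec 10 (by norm_num)
    norm_num [sum_Icc1, Finset.sum_range_succ, h0,h1,h2,h3,h4,h5,b6,b7,b8,b9] at h
    linarith
  have b11 : a 11 = 254577475584 := by
    have h := hrec 11 (by norm_num)
    norm_num [sum_Icc1, Finset.sum_range_succ, h0,h1,h2,h3,h4,h5,b6,b7,b8,b9,b10] at h
    linarith
  have main : ∀ n, PIIIInv a n := by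
    intro n
    induction n using Nat.strong_induction_on with
    | _ n IH =>
    by_cases hn11 : n ≤ 10
    · -- base region
      refine ⟨?_, ?_, ?_, ?_, ?_, ?_⟩ <;> intro hlo
      · interval_cases n <;> norm_num [h3,h4,h5,b6,b7,b8,b9,b10]
      · interval_cases n <;> norm_num [h3,h4,h5,b6,b7,b8,b9,b10]
      · interval_cases n <;> norm_num [h3,h4,h5,b6,b7,b8,b9,b10]
      · interval_cases n <;> norm_num [h3,h4,h5,b6,b7,b8,b9,b10]
      · interval_cases n <;>
          norm_num [Ph, Finset.sum_range_succ, h3,h4,h5,b6,b7,b8,b9,b10]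
      · interval_cases n <;>
          norm_num [Vv, Finset.sum_range_succ, h3,h4,h5,b6,b7,b8,b9,b10]
    · push_neg at hn11
      obtain ⟨p, rfl⟩ : ∃ p, n = p + 11 := ⟨n - 11, by omega⟩
      have hp0 : (0:ℝ) ≤ (p:ℝ) := Nat.cast_nonneg p
      -- IH extraction
      have Ipos : ∀ k, 3 ≤ k → k < p+11 → 0 < a k := fun k hk1 hk2 => (IH k hk2).1 hk1
      have IB : ∀ k, 5 ≤ k → k < p+11 → 32/3*((k:ℝ)-3)*((k:ℝ)-2) * a (k-2) ≤ a k :=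
        fun k hk1 hk2 => (IH k hk2).2.1 hk1
      have IC : ∀ k, 5 ≤ k → k < p+11 → a k ≤ 32/3*((k:ℝ)-2)*((k:ℝ)-1) * a (k-2) :=
        fun k hk1 hk2 => (IH k hk2).2.2.1 hk1
      have Ir : ∀ k, 7 ≤ k → k < p+11 → 12 * a (k-1) ≤ a k :=
        fun k hk1 hk2 => (IH k hk2).2.2.2.1 hk1
      have IPh : ∀ k, 6 ≤ k → k < p+11 → Ph a k ≤ 1000 * a (k-3) :=
        fun k hk1 hk2 => (IH k hk2).2.2.2.2.1 hk1
      have IVv : ∀ k, 6 ≤ k → k < p+11 → Vv a k ≤ 120*(k:ℝ)^2 * a (k-3) :=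
        fun k hk1 hk2 => (IH k hk2).2.2.2.2.2 hk1
      have hann : ∀ k, 1 ≤ k → k < p+11 → 0 ≤ a k := by
        intro k hk1 hk2
        match k, hk1 with
        | 1, _ => rw [h1]; norm_num
        | 2, _ => rw [h2]
        | (m+3), _ => exact (Ipos (m+3) (by omega) hk2).le
      -- basic positivity
      have hx := Ipos (p+9) (by omega) (by omega)
      have hy := Ipos (p+8) (by omega) (by omega)
      have hw := Ipos (p+7) (by omega) (by omega)
      have hz := Ipos (p+6) (by omega) (by omega)
      -- Phi at n
      have phiN : Ph a (p+11) ≤ 1000 * a (p+8) := by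
        by_cases hp3 : p ≤ 3
        · interval_cases p <;>
            norm_num [Ph, Finset.sum_range_succ, h3,h4,h5,b6,b7,b8,b9,b10,b11]
        · have h15 : 15 ≤ p+11 := by omega
          have res := phi_step a h3 h4 (p+11) h15
            (fun u hu1 hu2 => IC u hu1 (by omega))
            (fun k hk1 hk2 => Ipos k hk1 (by omega))
            (by
              rw [show p+11-2 = p+9 by omega, show p+11-5 = p+6 by omega]
              have := IPh (p+9) (by omega) (by omega)
              rwa [show p+9-3 = p+6 by omega] at this)
            (by
              rw [show p+11-5 = p+6 by omega, show p+11-3 = p+8 by omega]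
              have := IB (p+8) (by omega) (by omega)
              rw [show p+8-2 = p+6 by omega] at this
              push_cast at this ⊢
              linarith [this])
            (by
              rw [show p+11-4 = p+7 by omega, show p+11-3 = p+8 by omega]
              have := Ir (p+8) (by omega) (by omega)
              rwa [show p+8-1 = p+7 by omega] at this)
          rwa [show p+11-3 = p+8 by omega] at res
      -- Vv at n
      have vvN : Vv a (p+11) ≤ 120*((p+11:ℕ):ℝ)^2 * a (p+8) := by
        by_cases hp2 : p ≤ 2
        · interval_cases p <;>
            norm_num [Vv, Finset.sum_range_succ, h3,h4,h5,b6,b7,b8,b9,b10,b11]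
        · have h14 : 14 ≤ p+11 := by omega
          have res := vv_step a h3 h4 (p+11) h14
            (fun u hu1 hu2 => IC u hu1 (by omega))
            (fun k hk1 hk2 => Ipos k hk1 (by omega))
            (by
              rw [show p+11-2 = p+9 by omega, show p+11-5 = p+6 by omega]
              have := IVv (p+9) (by omega) (by omega)
              rw [show p+9-3 = p+6 by omega] at this
              push_cast at this ⊢
              linarith [this])
            (by
              rw [show p+11-5 = p+6 by omega, show p+11-3 = p+8 by omega]
              have := IB (p+8) (by omega) (by omega)
              rw [show p+8-2 = p+6 by omega] at this
              push_cast at this ⊢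
              linarith [this])
            (by
              rw [show p+11-4 = p+7 by omega, show p+11-3 = p+8 by omega]
              have := Ir (p+8) (by omega) (by omega)
              rwa [show p+8-1 = p+7 by omega] at this)
          rwa [show p+11-3 = p+8 by omega] at res
      -- G bounds at n
      have hG0 : 0 ≤ Gg a (p+11) := by
        apply Gnn
        intro k hk1 hk2
        exact (Ipos k hk1 (by omega)).le
      have hGb : Gg a (p+11) ≤ 503/3 * a (p+8) := by
        have := Gbound a h3 (p+11) (by omega)
          (by rwa [show p+11-3 = p+8 by omega])
          (fun k hk1 hk2 => Ipos k hk1 (by omega))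
        rwa [show p+11-3 = p+8 by omega] at this
      -- D and T bounds
      have hD : ∀ m, 2 ≤ m → m ≤ p+10 → Dd a m ≤ 46/5 * a (m-1) := by
        intro m hm2 hm10
        apply Dbound a h1 h2 h3 h4 h5 b6 b7 m hm2
        intro hm9
        refine ⟨?_, Ipos (m-3) (by omega) (by omega), ?_, ?_⟩
        · exact Gbound a h3 m (by omega) (IPh m (by omega) (by omega))
            (fun k hk1 hk2 => Ipos k hk1 (by omega))
        · have := Ir (m-2) (by omega) (by omega)
          rwa [show m-2-1 = m-3 by omega] at this
        · have := Ir (m-1) (by omega) (by omega)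
          rwa [show m-1-1 = m-2 by omega] at this
      have hTb : (∑ i ∈ range (p+9), a (i+1) * Dd a (p+10-i)) ≤ 2116/25 * a (p+9) :=
        Tbound a p hD (fun k hk1 hk2 => hann k hk1 (by omega))
      have hT0 : 0 ≤ ∑ i ∈ range (p+9), a (i+1) * Dd a (p+10-i) := by
        apply Finset.sum_nonneg
        intro i hi
        rw [Finset.mem_range] at hi
        apply mul_nonneg (hann (i+1) (by omega) (by omega))
        exact Dnn a (p+10-i) (fun k hk1 hk2 => hann k hk1 (by omega))
      -- V bounds at n-2
      have hV0 : 0 ≤ Vv a (p+9) :=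
        Vnn a (p+9) (fun k hk1 hk2 => (Ipos k hk1 (by omega)).le)
      have hVb : Vv a (p+9) ≤ 120*((p:ℝ)+9)^2 * a (p+6) := by
        have := IVv (p+9) (by omega) (by omega)
        rw [show p+9-3 = p+6 by omega] at this
        push_cast at this
        exact this
      -- neighbor bounds
      have hBn1 : 32/3*((p:ℝ)+7)*((p:ℝ)+8) * a (p+8) ≤ a (p+10) := by
        have := IB (p+10) (by omega) (by omega)
        rw [show p+10-2 = p+8 by omega] at this
        push_cast at this
        linarith [this]
      have hCn1 : a (p+10) ≤ 32/3*((p:ℝ)+8)*((p:ℝ)+9) * a (p+8) := by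
        have := IC (p+10) (by omega) (by omega)
        rw [show p+10-2 = p+8 by omega] at this
        push_cast at this
        linarith [this]
      have hBn2 : 32/3*((p:ℝ)+6)*((p:ℝ)+7) * a (p+7) ≤ a (p+9) := by
        have := IB (p+9) (by omega) (by omega)
        rw [show p+9-2 = p+7 by omega] at this
        push_cast at this
        linarith [this]
      have hr2 : 12 * a (p+8) ≤ a (p+9) := by
        have := Ir (p+9) (by omega) (by omega)
        rwa [show p+9-1 = p+8 by omega] at this
      have hrz : 12 * a (p+6) ≤ a (p+7) := by
        have := Ir (p+7) (by omega) (by omega)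
        rwa [show p+7-1 = p+6 by omega] at this
      -- star identity
      have hstar := star a h0 h1 h2 p (hrec (p+11) (by omega))
      -- chains for the V term
      have c1 : 640*((p:ℝ)+9)^2 * a (p+6) ≤ 160/3*((p:ℝ)+9)^2 * a (p+7) := by
        linarith [mul_le_mul_of_nonneg_left hrz (by positivity : (0:ℝ) ≤ 160/3*((p:ℝ)+9)^2)]
      have c2 : 160/3*((p:ℝ)+9)^2 * a (p+7) ≤ 10 * a (p+9) := by
        have hpoly : (0:ℝ) ≤ 2*((p:ℝ)+6)*((p:ℝ)+7) - ((p:ℝ)+9)^2 := by nlinarith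
        linarith [mul_nonneg hpoly hw.le, hBn2]
      have c3 : 16/3 * Vv a (p+9) ≤ 640*((p:ℝ)+9)^2 * a (p+6) := by
        linarith [hVb]
      -- B at n
      have hpx : 0 ≤ (p:ℝ) * a (p+9) := mul_nonneg hp0 hx.le
      have hpy : 0 ≤ (p:ℝ) * a (p+8) := mul_nonneg hp0 hy.le
      have Bn : 32/3*((p:ℝ)+8)*((p:ℝ)+9) * a (p+9) ≤ a (p+11) := by
        linarith [hstar, hBn1, c1, c2, c3, hG0, hTb, hpx, hpy, hx.le, hy.le, hV0]
      have Cn : a (p+11) ≤ 32/3*((p:ℝ)+9)*((p:ℝ)+10) * a (p+9) := by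
        have hpr2 : 12*((p:ℝ)* a (p+8)) ≤ (p:ℝ) * a (p+9) := by
          linarith [mul_le_mul_of_nonneg_left hr2 hp0]
        linarith [hstar, hCn1, hGb, hT0, hV0, hr2, hpr2, hx.le, hy.le, hpy]
      have posn : 0 < a (p+11) := by
        have hc : (0:ℝ) < 32/3*((p:ℝ)+8)*((p:ℝ)+9) := by positivity
        linarith [mul_pos hc hx, Bn]
      have r12n : 12 * a (p+10) ≤ a (p+11) := by
        have hcoef : (0:ℝ) ≤ 32/3*((p:ℝ)+8)*((p:ℝ)+9) := by positivity
        linarith [hCn1, Bn, mul_le_mul_of_nonneg_left hr2 hcoef]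
      refine ⟨fun _ => posn, fun _ => ?_, fun _ => ?_, fun _ => r12n, fun _ => phiN, fun _ => vvN⟩
      · rw [show p+11-2 = p+9 by omega]
        push_cast
        linarith [Bn]
      · rw [show p+11-2 = p+9 by omega]
        push_cast
        linarith [Cn]
  intro n hn
  have h := (main n).2.1 hn
  linarith [h]
end

section
/- Let a_n be given by the general Painlevé III recurrence: a_0 a nonzero cube root of -δ/α, a_1 = -β/(2α a_0), a_2 = 0, a_3 = -(β/(6α²a_0²))(β²/(4δ)+1), and for n ≥ 4, a_n = (1/(3α a_0²))·(-α∑_{k=1}^{n-1} a_k ∑_{j=0}^{n-k} a_j a_{n-k-j} - α a_0 ∑_{k=1}^{n-1} a_k a_{n-k} - (3/2)β a_{n-1} + ∑_{k=1}^{n-2}(2k² + k(2-n)) a_k a_{n-2-k}). If ã_n denotes the coefficients obtained with the branch choice ã_0 = ω·a_0 where ω³ = 1, then ã_n = ω^{n+1}·a_n for all n ≥ 0. -/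
theorem stmt_13 (α β δ : ℂ) (hαδ : α * δ ≠ 0) (a b : ℕ → ℂ) (ω : ℂ) (hω : ω ^ 3 = 1)
    (ha0 : (a 0) ^ 3 = -δ / α) (ha0ne : a 0 ≠ 0)
    (ha1 : a 1 = -β / (2 * α * a 0)) (ha2 : a 2 = 0)
    (ha3 : a 3 = -(β / (6 * α ^ 2 * (a 0) ^ 2)) * (β ^ 2 / (4 * δ) + 1))
    (harec : ∀ n : ℕ, 4 ≤ n →
      a n = (1 / (3 * α * (a 0) ^ 2)) *
        (-α * ∑ k ∈ Finset.Icc 1 (n - 1),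
            a k * ∑ j ∈ Finset.range (n - k + 1), a j * a (n - k - j)
         - α * a 0 * ∑ k ∈ Finset.Icc 1 (n - 1), a k * a (n - k)
         - (3 / 2) * β * a (n - 1)
         + ∑ k ∈ Finset.Icc 1 (n - 2),
            (2 * (k : ℂ) ^ 2 + (k : ℂ) * (2 - (n : ℂ))) * a k * a (n - 2 - k)))
    (hb0 : b 0 = ω * a 0)
    (hb1 : b 1 = -β / (2 * α * b 0)) (hb2 : b 2 = 0)
    (hb3 : b 3 = -(β / (6 * α ^ 2 * (b 0) ^ 2)) * (β ^ 2 / (4 * δ) + 1))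
    (hbrec : ∀ n : ℕ, 4 ≤ n →
      b n = (1 / (3 * α * (b 0) ^ 2)) *
        (-α * ∑ k ∈ Finset.Icc 1 (n - 1),
            b k * ∑ j ∈ Finset.range (n - k + 1), b j * b (n - k - j)
         - α * b 0 * ∑ k ∈ Finset.Icc 1 (n - 1), b k * b (n - k)
         - (3 / 2) * β * b (n - 1)
         + ∑ k ∈ Finset.Icc 1 (n - 2),
            (2 * (k : ℂ) ^ 2 + (k : ℂ) * (2 - (n : ℂ))) * b k * b (n - 2 - k))) :
    ∀ n : ℕ, b n = ω ^ (n + 1) * a n := by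
  have hα : α ≠ 0 := fun h => hαδ (by rw [h]; ring)
  have hδ : δ ≠ 0 := fun h => hαδ (by rw [h]; ring)
  have hω0 : ω ≠ 0 := fun h => by simp [h] at hω
  intro n
  induction n using Nat.strong_induction_on with
  | _ n ih =>
    rcases lt_or_ge n 4 with h4 | h4
    · interval_cases n
      · simpa using hb0
      · rw [hb1, ha1, hb0]
        field_simp
        linear_combination β * hω
      · simp [hb2, ha2]
      · rw [hb3, ha3, hb0, show (ω * a 0)^2 = ω^2 * (a 0)^2 by ring,
          show (ω:ℂ)^4 = ω^3 * ω by ring, hω, one_mul]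
        have h6 : -(β / (6 * α ^ 2 * (ω ^ 2 * (a 0) ^ 2)))
            = ω * -(β / (6 * α ^ 2 * (a 0) ^ 2)) := by
          field_simp
          linear_combination β * hω
        rw [h6]; ring
    · have h1 : b (n-1) = ω ^ n * a (n-1) := by
        rw [ih (n-1) (by omega), show n - 1 + 1 = n by omega]
      have hT1 : ∑ k ∈ Finset.Icc 1 (n-1),
            b k * ∑ j ∈ Finset.range (n - k + 1), b j * b (n - k - j)
          = ω ^ (n + 3) * ∑ k ∈ Finset.Icc 1 (n-1),
            a k * ∑ j ∈ Finset.range (n - k + 1), a j * a (n - k - j) := by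
        rw [Finset.mul_sum]
        refine Finset.sum_congr rfl ?_
        intro k hk
        simp only [Finset.mem_Icc] at hk
        have hin : ∑ j ∈ Finset.range (n - k + 1), b j * b (n - k - j)
            = ω ^ (n - k + 2) * ∑ j ∈ Finset.range (n - k + 1), a j * a (n - k - j) := by
          rw [Finset.mul_sum]
          refine Finset.sum_congr rfl ?_
          intro j hj
          simp only [Finset.mem_range] at hj
          rw [ih j (by omega), ih (n - k - j) (by omega)]
          have hp : ω ^ (j + 1) * ω ^ (n - k - j + 1) = ω ^ (n - k + 2) := by
            rw [← pow_add]; congr 1; omega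
          calc ω ^ (j + 1) * a j * (ω ^ (n - k - j + 1) * a (n - k - j))
              = ω ^ (j + 1) * ω ^ (n - k - j + 1) * (a j * a (n - k - j)) := by ring
            _ = ω ^ (n - k + 2) * (a j * a (n - k - j)) := by rw [hp]
        rw [ih k (by omega), hin]
        have hp : ω ^ (k + 1) * ω ^ (n - k + 2) = ω ^ (n + 3) := by
          rw [← pow_add]; congr 1; omega
        calc ω ^ (k + 1) * a k * (ω ^ (n - k + 2) * ∑ j ∈ Finset.range (n - k + 1), a j * a (n - k - j))
            = ω ^ (k + 1) * ω ^ (n - k + 2) * (a k * ∑ j ∈ Finset.range (n - k + 1), a j * a (n - k - j)) := by ring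
          _ = ω ^ (n + 3) * (a k * ∑ j ∈ Finset.range (n - k + 1), a j * a (n - k - j)) := by rw [hp]
      have hT2 : ∑ k ∈ Finset.Icc 1 (n-1), b k * b (n - k)
          = ω ^ (n + 2) * ∑ k ∈ Finset.Icc 1 (n-1), a k * a (n - k) := by
        rw [Finset.mul_sum]
        refine Finset.sum_congr rfl ?_
        intro k hk
        simp only [Finset.mem_Icc] at hk
        rw [ih k (by omega), ih (n - k) (by omega)]
        have hp : ω ^ (k + 1) * ω ^ (n - k + 1) = ω ^ (n + 2) := by
          rw [← pow_add]; congr 1; omega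
        calc ω ^ (k + 1) * a k * (ω ^ (n - k + 1) * a (n - k))
            = ω ^ (k + 1) * ω ^ (n - k + 1) * (a k * a (n - k)) := by ring
          _ = ω ^ (n + 2) * (a k * a (n - k)) := by rw [hp]
      have hT4 : ∑ k ∈ Finset.Icc 1 (n-2),
            (2 * (k : ℂ) ^ 2 + (k : ℂ) * (2 - (n : ℂ))) * b k * b (n - 2 - k)
          = ω ^ n * ∑ k ∈ Finset.Icc 1 (n-2),
            (2 * (k : ℂ) ^ 2 + (k : ℂ) * (2 - (n : ℂ))) * a k * a (n - 2 - k) := by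
        rw [Finset.mul_sum]
        refine Finset.sum_congr rfl ?_
        intro k hk
        simp only [Finset.mem_Icc] at hk
        rw [ih k (by omega), ih (n - 2 - k) (by omega)]
        have hp : ω ^ (k + 1) * ω ^ (n - 2 - k + 1) = ω ^ n := by
          rw [← pow_add]; congr 1; omega
        calc (2 * (k : ℂ) ^ 2 + (k : ℂ) * (2 - (n : ℂ))) * (ω ^ (k + 1) * a k) * (ω ^ (n - 2 - k + 1) * a (n - 2 - k))
            = ω ^ (k + 1) * ω ^ (n - 2 - k + 1) * ((2 * (k : ℂ) ^ 2 + (k : ℂ) * (2 - (n : ℂ))) * a k * a (n - 2 - k)) := by ring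
          _ = ω ^ n * ((2 * (k : ℂ) ^ 2 + (k : ℂ) * (2 - (n : ℂ))) * a k * a (n - 2 - k)) := by rw [hp]
      rw [hbrec n h4, harec n h4, hb0, hT1, hT2, hT4, h1]
      have hpre : (1:ℂ) / (3 * α * (ω * a 0) ^ 2) = ω * (1 / (3 * α * (a 0) ^ 2)) := by
        field_simp
        linear_combination (-1 : ℂ) * hω
      rw [hpre]
      set S1 := ∑ k ∈ Finset.Icc 1 (n-1),
            a k * ∑ j ∈ Finset.range (n - k + 1), a j * a (n - k - j) with hS1
      set S2 := ∑ k ∈ Finset.Icc 1 (n-1), a k * a (n - k) with hS2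
      set S4 := ∑ k ∈ Finset.Icc 1 (n-2),
            (2 * (k : ℂ) ^ 2 + (k : ℂ) * (2 - (n : ℂ))) * a k * a (n - 2 - k) with hS4
      linear_combination ((1 / (3 * α * (a 0) ^ 2)) *
        (-α * S1 * ω ^ n * ω - α * (a 0) * S2 * ω ^ n * ω)) * hω
end

section
/- Let b_n = a_n/n! where a_n satisfy 4·(32/3)^{n/2-1}·(n-2)! ≤ a_n ≤ (32/3)^{n/2-1}·n! for all n ≥ 5. Then limsup_{n→∞} |b_n|^{1/n} = √(32/3); consequently the power series ∑ b_n t^n has radius of convergence √(3/32). -/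
open Filter Real

private lemma stmt15_gen (c : ℝ) (hc0 : (0:ℝ) < c) (b : ℕ → ℝ)
    (h : ∀ᶠ n : ℕ in atTop,
      c ^ ((n:ℝ)/2 - 1) / (n:ℝ)^2 ≤ b n ∧ b n ≤ c ^ ((n:ℝ)/2 - 1)) :
    Tendsto (fun n : ℕ => |b n| ^ ((n : ℝ)⁻¹)) atTop (nhds (Real.sqrt c)) := by
  have t1 : Tendsto (fun n : ℕ => ((n:ℝ))⁻¹) atTop (nhds 0) :=
    tendsto_inv_atTop_zero.comp tendsto_natCast_atTop_atTop
  have texp : Tendsto (fun n : ℕ => (1:ℝ)/2 - ((n:ℝ))⁻¹) atTop (nhds (1/2)) := by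
    simpa using tendsto_const_nhds.sub t1
  have tu : Tendsto (fun n : ℕ => c ^ ((1:ℝ)/2 - ((n:ℝ))⁻¹)) atTop (nhds (c ^ ((1:ℝ)/2))) :=
    Tendsto.rpow tendsto_const_nhds texp (Or.inl hc0.ne')
  have tnn : Tendsto (fun n : ℕ => ((n:ℝ)) ^ (((n:ℝ))⁻¹)) atTop (nhds 1) := by
    have := tendsto_rpow_div.comp (tendsto_natCast_atTop_atTop (R := ℝ))
    simpa [Function.comp_def, one_div] using this
  have tn2 : Tendsto (fun n : ℕ => (((n:ℝ)) ^ (((n:ℝ))⁻¹)) ^ (-2 : ℝ)) atTop (nhds 1) := by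
    have := Tendsto.rpow tnn (tendsto_const_nhds (x := (-2:ℝ))) (Or.inl one_ne_zero)
    simpa using this
  have tl : Tendsto (fun n : ℕ => c ^ ((1:ℝ)/2 - ((n:ℝ))⁻¹) * (((n:ℝ)) ^ (((n:ℝ))⁻¹)) ^ (-2:ℝ))
      atTop (nhds (c ^ ((1:ℝ)/2))) := by
    simpa using tu.mul tn2
  rw [Real.sqrt_eq_rpow]
  apply tendsto_of_tendsto_of_tendsto_of_le_of_le' tl tu
  · filter_upwards [h, eventually_ge_atTop 1] with n hb hn
    have hn0 : (0:ℝ) < (n:ℝ) := by exact_mod_cast Nat.pos_of_ne_zero (by omega)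
    have hn0' : ((n:ℝ)) ≠ 0 := hn0.ne'
    have hlow := hb.1
    have hbn : 0 ≤ b n := le_trans (by positivity) hlow
    rw [abs_of_nonneg hbn]
    have key : (c ^ ((n:ℝ)/2 - 1) / (n:ℝ)^2) ^ (((n:ℝ))⁻¹)
        = c ^ ((1:ℝ)/2 - ((n:ℝ))⁻¹) * (((n:ℝ)) ^ (((n:ℝ))⁻¹)) ^ (-2:ℝ) := by
      rw [Real.div_rpow (by positivity) (by positivity),
        ← Real.rpow_natCast (n:ℝ) 2, ← Real.rpow_mul hn0.le, ← Real.rpow_mul hc0.le,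
        ← Real.rpow_mul hn0.le, div_eq_mul_inv, ← Real.rpow_neg hn0.le]
      congr 1
      · congr 1; field_simp
      · congr 1; push_cast; field_simp
    rw [← key]
    exact Real.rpow_le_rpow (by positivity) hlow (by positivity)
  · filter_upwards [h, eventually_ge_atTop 1] with n hb hn
    have hn0 : (0:ℝ) < (n:ℝ) := by exact_mod_cast Nat.pos_of_ne_zero (by omega)
    have hbn : 0 ≤ b n := le_trans (by positivity) hb.1
    rw [abs_of_nonneg hbn]
    calc (b n) ^ (((n:ℝ))⁻¹)
        ≤ (c ^ ((n:ℝ)/2 - 1)) ^ (((n:ℝ))⁻¹) := Real.rpow_le_rpow hbn hb.2 (by positivity)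
      _ = c ^ ((1:ℝ)/2 - ((n:ℝ))⁻¹) := by
          rw [← Real.rpow_mul hc0.le]
          congr 1; field_simp

private lemma stmt15_key (a : ℕ → ℝ)
    (hbound : ∀ n : ℕ, 5 ≤ n →
      4 * (32 / 3 : ℝ) ^ ((n : ℝ) / 2 - 1) * (Nat.factorial (n - 2) : ℝ) ≤ a n ∧
      a n ≤ (32 / 3 : ℝ) ^ ((n : ℝ) / 2 - 1) * (Nat.factorial n : ℝ)) :
    Tendsto (fun n : ℕ => |a n / (Nat.factorial n : ℝ)| ^ ((n : ℝ)⁻¹)) atTop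
      (nhds (Real.sqrt (32 / 3))) := by
  apply stmt15_gen (32/3 : ℝ) (by norm_num)
  filter_upwards [eventually_ge_atTop 5] with n hn
  have hn0 : (0:ℝ) < (n:ℝ) := by positivity
  have hfp : (0:ℝ) < (Nat.factorial n : ℝ) := by positivity
  have hb := hbound n hn
  have hfact : (Nat.factorial n : ℝ) ≤ (n:ℝ)^2 * (Nat.factorial (n-2) : ℝ) := by
    obtain ⟨m, rfl⟩ : ∃ m, n = m + 2 := ⟨n - 2, by omega⟩
    push_cast [Nat.factorial_succ]
    nlinarith [(by positivity : (0:ℝ) < (Nat.factorial m : ℝ)),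
      (by positivity : (0:ℝ) ≤ (m:ℝ))]
  constructor
  · rw [div_le_div_iff₀ (by positivity) hfp]
    have hrp : (0:ℝ) < (32/3:ℝ) ^ ((n:ℝ)/2 - 1) := Real.rpow_pos_of_pos (by norm_num) _
    have hf2 : (0:ℝ) < (Nat.factorial (n-2) : ℝ) := by positivity
    calc (32/3:ℝ) ^ ((n:ℝ)/2 - 1) * (Nat.factorial n : ℝ)
        ≤ (32/3:ℝ) ^ ((n:ℝ)/2 - 1) * ((n:ℝ)^2 * (Nat.factorial (n-2) : ℝ)) :=
          mul_le_mul_of_nonneg_left hfact hrp.le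
      _ ≤ 4 * (32/3:ℝ) ^ ((n:ℝ)/2 - 1) * (Nat.factorial (n-2) : ℝ) * (n:ℝ)^2 := by nlinarith
      _ ≤ a n * (n:ℝ)^2 := mul_le_mul_of_nonneg_right hb.1 (by positivity)
  · rw [div_le_iff₀ hfp] at *
    exact hb.2

theorem stmt_15 (a : ℕ → ℝ)
    (hbound : ∀ n : ℕ, 5 ≤ n →
      4 * (32 / 3 : ℝ) ^ ((n : ℝ) / 2 - 1) * (Nat.factorial (n - 2) : ℝ) ≤ a n ∧
      a n ≤ (32 / 3 : ℝ) ^ ((n : ℝ) / 2 - 1) * (Nat.factorial n : ℝ)) :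
    Filter.limsup (fun n : ℕ => |a n / (Nat.factorial n : ℝ)| ^ ((n : ℝ)⁻¹)) Filter.atTop
        = Real.sqrt (32 / 3) ∧
    (∀ t : ℝ, |t| < Real.sqrt (3 / 32) →
      Summable (fun n : ℕ => a n / (Nat.factorial n : ℝ) * t ^ n)) ∧
    (∀ t : ℝ, Real.sqrt (3 / 32) < |t| →
      ¬ Summable (fun n : ℕ => a n / (Nat.factorial n : ℝ) * t ^ n)) := by
  have key := stmt15_key a hbound
  set s : ℝ := Real.sqrt (32/3) with hs
  have hs0 : (0:ℝ) < s := Real.sqrt_pos.mpr (by norm_num)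
  have hinv : Real.sqrt (3/32) = s⁻¹ := by
    rw [hs, ← Real.sqrt_inv]; norm_num
  have habs : ∀ (t : ℝ) (n : ℕ), 1 ≤ n →
      |a n / (Nat.factorial n : ℝ) * t ^ n|
        = (|a n / (Nat.factorial n : ℝ)| ^ ((n:ℝ)⁻¹) * |t|) ^ n := by
    intro t n hn
    have hn0 : ((n:ℝ)) ≠ 0 := by positivity
    rw [mul_pow, ← Real.rpow_natCast (|a n / (Nat.factorial n : ℝ)| ^ ((n:ℝ)⁻¹)) n,
      ← Real.rpow_mul (abs_nonneg _), inv_mul_cancel₀ hn0, Real.rpow_one,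
      abs_mul, abs_pow]
  refine ⟨key.limsup_eq, ?_, ?_⟩
  · intro t ht
    rw [hinv] at ht
    have hst : s * |t| < 1 := by
      calc s * |t| < s * s⁻¹ := by
            exact mul_lt_mul_of_pos_left ht hs0
        _ = 1 := mul_inv_cancel₀ hs0.ne'
    set r : ℝ := (s * |t| + 1) / 2 with hr
    have hr0 : 0 ≤ r := by positivity
    have hr1 : r < 1 := by rw [hr]; linarith
    have hsr : s * |t| < r := by rw [hr]; linarith
    have hev : ∀ᶠ n : ℕ in atTop,
        |a n / (Nat.factorial n : ℝ)| ^ ((n:ℝ)⁻¹) * |t| < r :=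
      Tendsto.eventually_lt_const hsr (key.mul_const |t|)
    apply Summable.of_norm_bounded_eventually_nat
      (summable_geometric_of_lt_one hr0 hr1)
    filter_upwards [hev, eventually_ge_atTop 1] with n h1 hn
    rw [Real.norm_eq_abs, habs t n hn]
    exact pow_le_pow_left₀ (by positivity) h1.le n
  · intro t ht hsum
    rw [hinv] at ht
    have hst : 1 < s * |t| := by
      rw [← mul_inv_cancel₀ hs0.ne']
      exact mul_lt_mul_of_pos_left ht hs0
    have hev : ∀ᶠ n : ℕ in atTop,
        1 < |a n / (Nat.factorial n : ℝ)| ^ ((n:ℝ)⁻¹) * |t| :=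
      Tendsto.eventually_const_lt hst (key.mul_const |t|)
    have hzero := hsum.tendsto_atTop_zero
    have hlt : ∀ᶠ n : ℕ in atTop, |a n / (Nat.factorial n : ℝ) * t ^ n| < 1 := by
      filter_upwards [hzero.eventually (Metric.ball_mem_nhds (0:ℝ) one_pos)] with n hn
      rw [Real.dist_eq, sub_zero] at hn
      exact hn
    obtain ⟨n, h1, h2, hn⟩ := (hev.and (hlt.and (eventually_ge_atTop 1))).exists
    rw [habs t n hn] at h2
    exact absurd h2 (not_lt.mpr (one_le_pow₀ h1.le))
end
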